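/- arXiv:2603.24468 — 3 statements merged into one kernel-verified Lean document; each statement's English description precedes it below -/
import Mathlib

section
/- For any words u and v over the alphabet with binders, the set of right-closed names of the concatenation uv equals (rc(u) \ (lc(v) ∪ lo(v))) ∪ rc(v). -/
inductive Letter (A : Type) : Type
  | free : A → Letter A
  | op   : A → Letter A
  | cl   : A → Letter A
  | both : A → Letter A

open scoped Classical

noncomputable def lo {A : Type} : List (Letter A) → Set A
  | [] => ∅
  | Letter.free a :: w => lo w ∪ {a}
  | Letter.op a :: w => lo w \ {a}
  | Letter.cl a :: w => lo w ∪ {a}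
  | Letter.both a :: w => lo w \ {a}

noncomputable def lc {A : Type} : List (Letter A) → Set A
  | [] => ∅
  | Letter.free a :: w => lc w \ {a}
  | Letter.op a :: w => lc w ∪ {a}
  | Letter.cl a :: w => lc w \ {a}
  | Letter.both a :: w => lc w ∪ {a}

noncomputable def rc {A : Type} : List (Letter A) → Set A
  | [] => ∅
  | Letter.free _ :: w => rc w
  | Letter.op _ :: w => rc w
  | Letter.cl a :: w => if a ∈ lc w ∪ lo w then rc w else rc w ∪ {a}
  | Letter.both a :: w => if a ∈ lc w ∪ lo w then rc w else rc w ∪ {a}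

def RNS {A : Type} (w : List (Letter A)) : Prop :=
  ∀ u v : List (Letter A), w = u ++ v → rc u ∩ lo v = ∅


lemma lclo_append {A : Type} (u v : List (Letter A)) :
    lc (u ++ v) ∪ lo (u ++ v) = (lc u ∪ lo u) ∪ (lc v ∪ lo v) := by
  induction u with
  | nil => simp [lc, lo]
  | cons l u ih =>
    cases l <;> simp only [List.cons_append, lc, lo] <;> ext x <;>
      simp only [Set.mem_union, Set.mem_diff, Set.mem_singleton_iff,
        Set.ext_iff, Set.mem_union] at * <;>
      have := ih x <;> tauto

set_option maxHeartbeats 1600000 in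
theorem rc_append {A : Type} (u v : List (Letter A)) :
    rc (u ++ v) = (rc u \ (lc v ∪ lo v)) ∪ rc v := by
  induction u with
  | nil => simp [rc]
  | cons l u ih =>
    cases l with
    | free a => simpa [rc] using ih
    | op a => simpa [rc] using ih
    | cl a =>
      have h : a ∈ lc (u ++ v) ∪ lo (u ++ v) ↔ a ∈ lc u ∪ lo u ∨ a ∈ lc v ∪ lo v := by
        rw [lclo_append]; simp [Set.mem_union]
      simp only [List.cons_append, rc, List.append_eq]
      by_cases hu : a ∈ lc u ∪ lo u
      · rw [if_pos (h.mpr (Or.inl hu)), if_pos hu, ih]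
      · rw [if_neg hu]
        by_cases hv : a ∈ lc v ∪ lo v
        · rw [if_pos (h.mpr (Or.inr hv)), ih]
          ext x
          simp only [Set.mem_union, Set.mem_diff, Set.union_singleton,
            Set.mem_insert_iff] at *
          by_cases hx : x = a
          · subst hx; tauto
          · tauto
        · rw [if_neg (fun c => (h.mp c).elim hu hv), ih]
          ext x
          simp only [Set.mem_union, Set.mem_diff, Set.union_singleton,
            Set.mem_insert_iff] at *
          by_cases hx : x = a
          · subst hx; tauto
          · tauto
    | both a =>
      have h : a ∈ lc (u ++ v) ∪ lo (u ++ v) ↔ a ∈ lc u ∪ lo u ∨ a ∈ lc v ∪ lo v := by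
        rw [lclo_append]; simp [Set.mem_union]
      simp only [List.cons_append, rc, List.append_eq]
      by_cases hu : a ∈ lc u ∪ lo u
      · rw [if_pos (h.mpr (Or.inl hu)), if_pos hu, ih]
      · rw [if_neg hu]
        by_cases hv : a ∈ lc v ∪ lo v
        · rw [if_pos (h.mpr (Or.inr hv)), ih]
          ext x
          simp only [Set.mem_union, Set.mem_diff, Set.union_singleton,
            Set.mem_insert_iff] at *
          by_cases hx : x = a
          · subst hx; tauto
          · tauto
        · rw [if_neg (fun c => (h.mp c).elim hu hv), ih]
          ext x
          simp only [Set.mem_union, Set.mem_diff, Set.union_singleton,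
            Set.mem_insert_iff] at *
          by_cases hx : x = a
          · subst hx; tauto
          · tauto
end

section
/- If w ≡α w' (alpha-equivalence of right-non-shadowing words over the alphabet with binders), then lo(w) = lo(w'). -/
open scoped Classical

def swapL {A : Type} [DecidableEq A] (a c : A) : Letter A → Letter A
  | Letter.free x => Letter.free (Equiv.swap a c x)
  | Letter.op x => Letter.op (Equiv.swap a c x)
  | Letter.cl x => Letter.cl (Equiv.swap a c x)
  | Letter.both x => Letter.both (Equiv.swap a c x)

def swapW {A : Type} [DecidableEq A] (a c : A) (w : List (Letter A)) : List (Letter A) :=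
  w.map (swapL a c)

def dbL {A : Type} : Letter A → A
  | Letter.free a => a
  | Letter.op a => a
  | Letter.cl a => a
  | Letter.both a => a

def names {A : Type} (w : List (Letter A)) : Set A := {x | ∃ γ ∈ w, dbL γ = x}

/-- Abstraction equality ⟨a⟩w = ⟨b⟩w' on raw words. -/
def absEq {A : Type} [DecidableEq A] (a : A) (w : List (Letter A)) (b : A)
    (w' : List (Letter A)) : Prop :=
  ∃ c : A, c ≠ a ∧ c ≠ b ∧ c ∉ names w ∧ c ∉ names w' ∧ swapW a c w = swapW b c w'

inductive AlphaEq {A : Type} [DecidableEq A] : List (Letter A) → List (Letter A) → Prop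
  | nil : AlphaEq [] []
  | bind {a b : A} {w w' : List (Letter A)} (h : absEq a w b w') :
      AlphaEq (Letter.op a :: w) (Letter.op b :: w')
  | cong_free {a : A} {w w' : List (Letter A)} (h : AlphaEq w w') :
      AlphaEq (Letter.free a :: w) (Letter.free a :: w')
  | cong_op {a : A} {w w' : List (Letter A)} (h : AlphaEq w w') :
      AlphaEq (Letter.op a :: w) (Letter.op a :: w')
  | cong_cl {a : A} {w w' : List (Letter A)} (h : AlphaEq w w') (ha : a ∉ lo w) :
      AlphaEq (Letter.cl a :: w) (Letter.cl a :: w')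
  | cong_both {a b : A} {w w' : List (Letter A)} (h : AlphaEq w w')
      (ha : a ∉ lo w) (hb : b ∉ lo w) :
      AlphaEq (Letter.both a :: w) (Letter.both b :: w')
  | trans {w u v : List (Letter A)} (h1 : AlphaEq w u) (h2 : AlphaEq u v) : AlphaEq w v

lemma lo_subset_names {A : Type} (w : List (Letter A)) : lo w ⊆ names w := by
  induction w with
  | nil => simp [lo]
  | cons γ w ih =>
    have hmem : ∀ x ∈ names w, x ∈ names (γ :: w) := by
      rintro x ⟨δ, hδ, rfl⟩; exact ⟨δ, List.mem_cons_of_mem _ hδ, rfl⟩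
    cases γ with
    | free a =>
      intro x hx
      rcases hx with hx | hx
      · exact hmem x (ih hx)
      · exact ⟨Letter.free a, List.mem_cons_self, hx.symm⟩
    | op a => intro x hx; exact hmem x (ih hx.1)
    | cl a =>
      intro x hx
      rcases hx with hx | hx
      · exact hmem x (ih hx)
      · exact ⟨Letter.cl a, List.mem_cons_self, hx.symm⟩
    | both a => intro x hx; exact hmem x (ih hx.1)

lemma lo_swap {A : Type} [DecidableEq A] (a c : A) (w : List (Letter A)) :
    lo (swapW a c w) = Equiv.swap a c '' lo w := by
  induction w with
  | nil => simp [swapW, lo]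
  | cons γ w ih =>
    cases γ with
    | free x =>
      show lo (Letter.free (Equiv.swap a c x) :: swapW a c w) = _
      simp only [lo, ih, Set.image_union, Set.image_singleton]
    | op x =>
      show lo (Letter.op (Equiv.swap a c x) :: swapW a c w) = _
      simp only [lo, ih, Set.image_diff (Equiv.swap a c).injective, Set.image_singleton]
    | cl x =>
      show lo (Letter.cl (Equiv.swap a c x) :: swapW a c w) = _
      simp only [lo, ih, Set.image_union, Set.image_singleton]
    | both x =>
      show lo (Letter.both (Equiv.swap a c x) :: swapW a c w) = _
      simp only [lo, ih, Set.image_diff (Equiv.swap a c).injective, Set.image_singleton]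

lemma lo_absEq {A : Type} [DecidableEq A] {a b : A} {w w' : List (Letter A)}
    (h : absEq a w b w') : lo w \ {a} = lo w' \ {b} := by
  obtain ⟨c, hca, hcb, hcw, hcw', heq⟩ := h
  have key : Equiv.swap a c '' lo w = Equiv.swap b c '' lo w' := by
    rw [← lo_swap, ← lo_swap, heq]
  have hclo : c ∉ lo w := fun hc => hcw (lo_subset_names w hc)
  have hclo' : c ∉ lo w' := fun hc => hcw' (lo_subset_names w' hc)
  ext x
  constructor
  · rintro ⟨hx, hxa⟩
    have hxa : x ≠ a := hxa
    have hxc : x ≠ c := fun h => hclo (h ▸ hx)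
    have : x ∈ Equiv.swap a c '' lo w := ⟨x, hx, Equiv.swap_apply_of_ne_of_ne hxa hxc⟩
    rw [key] at this
    obtain ⟨y, hy, hyx⟩ := this
    have hyc : y ≠ c := fun h => hclo' (h ▸ hy)
    have hyb : y ≠ b := by
      rintro rfl
      rw [Equiv.swap_apply_left] at hyx
      exact hxc hyx.symm
    rw [Equiv.swap_apply_of_ne_of_ne hyb hyc] at hyx
    subst hyx
    exact ⟨hy, hyb⟩
  · rintro ⟨hx, hxb⟩
    have hxb : x ≠ b := hxb
    have hxc : x ≠ c := fun h => hclo' (h ▸ hx)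
    have : x ∈ Equiv.swap b c '' lo w' := ⟨x, hx, Equiv.swap_apply_of_ne_of_ne hxb hxc⟩
    rw [← key] at this
    obtain ⟨y, hy, hyx⟩ := this
    have hyc : y ≠ c := fun h => hclo (h ▸ hy)
    have hya : y ≠ a := by
      rintro rfl
      rw [Equiv.swap_apply_left] at hyx
      exact hxc hyx.symm
    rw [Equiv.swap_apply_of_ne_of_ne hya hyc] at hyx
    subst hyx
    exact ⟨hy, hya⟩

theorem lo_eq_of_alphaEq {A : Type} [DecidableEq A] (w w' : List (Letter A))
    (h : AlphaEq w w') : lo w = lo w' := by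
  induction h with
  | nil => rfl
  | bind h => exact lo_absEq h
  | cong_free h ih => show lo _ ∪ {_} = lo _ ∪ {_}; rw [ih]
  | cong_op h ih => show lo _ \ {_} = lo _ \ {_}; rw [ih]
  | cong_cl h ha ih => show lo _ ∪ {_} = lo _ ∪ {_}; rw [ih]
  | cong_both h ha hb ih =>
    show lo _ \ {_} = lo _ \ {_}
    rw [Set.diff_singleton_eq_self ha, ← ih, Set.diff_singleton_eq_self hb]
  | trans h1 h2 ih1 ih2 => exact ih1.trans ih2
end

section
/- For every word w over the alphabet with binders, disc(w) is disciplined: for every decomposition disc(w) = uv and every name a, if a ∈ lc(u) ∪ lo(u) then a ∈ rc(u), or (a ∈ rc(v) and a ∉ lc(v)). -/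
open scoped Classical

noncomputable def disc {A : Type} : List (Letter A) → List (Letter A)
  | [] => []
  | Letter.free a :: w => if a ∈ lo w then Letter.free a :: disc w else Letter.cl a :: disc w
  | Letter.op a :: w => if a ∈ lo w then Letter.op a :: disc w else Letter.both a :: disc w
  | Letter.cl a :: w => Letter.cl a :: disc w
  | Letter.both a :: w => Letter.both a :: disc w

def Disciplined {A : Type} (x : List (Letter A)) : Prop :=
  ∀ u v : List (Letter A), x = u ++ v →
    ∀ a : A, a ∈ lc u ∪ lo u → a ∈ rc u ∨ (a ∈ rc v ∧ a ∉ lc v)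

section Aux
variable {A : Type}

lemma lo_disc (s : List (Letter A)) : lo (disc s) = lo s := by
  induction s with
  | nil => rfl
  | cons c t ih =>
    cases c with
    | free a => by_cases h : a ∈ lo t <;> simp [disc, h, lo, ih]
    | op a => by_cases h : a ∈ lo t <;> simp [disc, h, lo, ih]
    | cl a => simp [disc, lo, ih]
    | both a => simp [disc, lo, ih]

lemma lc_disc (s : List (Letter A)) : lc (disc s) = lc s := by
  induction s with
  | nil => rfl
  | cons c t ih =>
    cases c with
    | free a => by_cases h : a ∈ lo t <;> simp [disc, h, lc, ih]
    | op a => by_cases h : a ∈ lo t <;> simp [disc, h, lc, ih]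
    | cl a => simp [disc, lc, ih]
    | both a => simp [disc, lc, ih]

lemma key_rc (s : List (Letter A)) : ∀ a, a ∈ lc s ∪ lo s → a ∈ rc (disc s) := by
  induction s with
  | nil => intro a h; simp [lc, lo] at h
  | cons c t ih =>
    intro a h
    cases c with
    | free b =>
      by_cases hb : b ∈ lo t
      · simp only [disc, hb, if_pos, rc]
        simp only [lc, lo, Set.mem_union, Set.mem_diff, Set.mem_singleton_iff] at h
        rcases h with ⟨h1, _⟩ | (h1 | h1)
        · exact ih a (Or.inl h1)
        · exact ih a (Or.inr h1)
        · exact ih a (Or.inr (h1 ▸ hb))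
      · simp only [disc, hb, if_neg, not_false_iff, rc, lo_disc, lc_disc]
        simp only [lc, lo, Set.mem_union, Set.mem_diff, Set.mem_singleton_iff] at h
        split_ifs with hm
        · rcases h with ⟨h1, _⟩ | (h1 | h1)
          · exact ih a (Or.inl h1)
          · exact ih a (Or.inr h1)
          · exact h1 ▸ ih b hm
        · rcases h with ⟨h1, _⟩ | (h1 | h1)
          · exact Or.inl (ih a (Or.inl h1))
          · exact Or.inl (ih a (Or.inr h1))
          · exact Or.inr h1
    | op b =>
      by_cases hb : b ∈ lo t
      · simp only [disc, hb, if_pos, rc]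
        simp only [lc, lo, Set.mem_union, Set.mem_diff, Set.mem_singleton_iff] at h
        rcases h with (h1 | h1) | ⟨h1, _⟩
        · exact ih a (Or.inl h1)
        · exact ih a (Or.inr (h1 ▸ hb))
        · exact ih a (Or.inr h1)
      · simp only [disc, hb, if_neg, not_false_iff, rc, lo_disc, lc_disc]
        simp only [lc, lo, Set.mem_union, Set.mem_diff, Set.mem_singleton_iff] at h
        split_ifs with hm
        · rcases h with (h1 | h1) | ⟨h1, _⟩
          · exact ih a (Or.inl h1)
          · exact h1 ▸ ih b hm
          · exact ih a (Or.inr h1)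
        · rcases h with (h1 | h1) | ⟨h1, _⟩
          · exact Or.inl (ih a (Or.inl h1))
          · exact Or.inr h1
          · exact Or.inl (ih a (Or.inr h1))
    | cl b =>
      simp only [disc, rc, lo_disc, lc_disc]
      simp only [lc, lo, Set.mem_union, Set.mem_diff, Set.mem_singleton_iff] at h
      split_ifs with hm
      · rcases h with ⟨h1, _⟩ | (h1 | h1)
        · exact ih a (Or.inl h1)
        · exact ih a (Or.inr h1)
        · exact h1 ▸ ih b hm
      · rcases h with ⟨h1, _⟩ | (h1 | h1)
        · exact Or.inl (ih a (Or.inl h1))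
        · exact Or.inl (ih a (Or.inr h1))
        · exact Or.inr h1
    | both b =>
      simp only [disc, rc, lo_disc, lc_disc]
      simp only [lc, lo, Set.mem_union, Set.mem_diff, Set.mem_singleton_iff] at h
      split_ifs with hm
      · rcases h with (h1 | h1) | ⟨h1, _⟩
        · exact ih a (Or.inl h1)
        · exact h1 ▸ ih b hm
        · exact ih a (Or.inr h1)
      · rcases h with (h1 | h1) | ⟨h1, _⟩
        · exact Or.inl (ih a (Or.inl h1))
        · exact Or.inr h1
        · exact Or.inl (ih a (Or.inr h1))

lemma lo_not_lc (s : List (Letter A)) : ∀ a, a ∈ lo s → a ∉ lc s := by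
  induction s with
  | nil => intro a h; simp [lo] at h
  | cons c t ih =>
    intro a h hc
    cases c with
    | free b =>
      simp only [lo, Set.mem_union, Set.mem_singleton_iff] at h
      simp only [lc, Set.mem_diff, Set.mem_singleton_iff] at hc
      rcases h with h | h
      · exact ih a h hc.1
      · exact hc.2 h
    | op b =>
      simp only [lo, Set.mem_diff, Set.mem_singleton_iff] at h
      simp only [lc, Set.mem_union, Set.mem_singleton_iff] at hc
      rcases hc with hc | hc
      · exact ih a h.1 hc
      · exact h.2 hc
    | cl b =>
      simp only [lo, Set.mem_union, Set.mem_singleton_iff] at h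
      simp only [lc, Set.mem_diff, Set.mem_singleton_iff] at hc
      rcases h with h | h
      · exact ih a h hc.1
      · exact hc.2 h
    | both b =>
      simp only [lo, Set.mem_diff, Set.mem_singleton_iff] at h
      simp only [lc, Set.mem_union, Set.mem_singleton_iff] at hc
      rcases hc with hc | hc
      · exact ih a h.1 hc
      · exact h.2 hc

lemma lo_append (x y : List (Letter A)) : ∀ a, a ∈ lo (x ++ y) → a ∈ lo x ∨ a ∈ lo y := by
  induction x with
  | nil => intro a h; exact Or.inr h
  | cons c t ih =>
    intro a h
    cases c with
    | free b =>
      simp only [List.cons_append, lo, Set.mem_union, Set.mem_singleton_iff] at h ⊢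
      rcases h with h | h
      · rcases ih a h with h' | h'
        · exact Or.inl (Or.inl h')
        · exact Or.inr h'
      · exact Or.inl (Or.inr h)
    | op b =>
      simp only [List.cons_append, lo, Set.mem_diff, Set.mem_singleton_iff] at h ⊢
      rcases ih a h.1 with h' | h'
      · exact Or.inl ⟨h', h.2⟩
      · exact Or.inr h'
    | cl b =>
      simp only [List.cons_append, lo, Set.mem_union, Set.mem_singleton_iff] at h ⊢
      rcases h with h | h
      · rcases ih a h with h' | h'
        · exact Or.inl (Or.inl h')
        · exact Or.inr h'
      · exact Or.inl (Or.inr h)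
    | both b =>
      simp only [List.cons_append, lo, Set.mem_diff, Set.mem_singleton_iff] at h ⊢
      rcases ih a h.1 with h' | h'
      · exact Or.inl ⟨h', h.2⟩
      · exact Or.inr h'

lemma disc_suffix : ∀ (t u v : List (Letter A)), disc t = u ++ v → ∃ t₂, v = disc t₂ := by
  intro t
  induction t with
  | nil =>
    intro u v h
    simp only [disc] at h
    exact ⟨[], by simpa [disc] using (List.append_eq_nil_iff.mp h.symm).2⟩
  | cons c t ih =>
    intro u v h
    cases u with
    | nil => exact ⟨c :: t, by simpa using h.symm⟩
    | cons d u' =>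
      have htail : disc t = u' ++ v := by
        cases c with
        | free b =>
          by_cases hb : b ∈ lo t <;> simp only [disc, hb, if_pos, if_neg, not_false_iff,
            List.cons_append, List.cons.injEq] at h <;> exact h.2
        | op b =>
          by_cases hb : b ∈ lo t <;> simp only [disc, hb, if_pos, if_neg, not_false_iff,
            List.cons_append, List.cons.injEq] at h <;> exact h.2
        | cl b =>
          simp only [disc, List.cons_append, List.cons.injEq] at h; exact h.2
        | both b =>
          simp only [disc, List.cons_append, List.cons.injEq] at h; exact h.2
      exact ih u' v htail

end Aux

section Main
variable {A : Type}

lemma in_suffix (t u' v : List (Letter A)) (hdt : disc t = u' ++ v) (a : A)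
    (hav : a ∈ lo v) : a ∈ rc v ∧ a ∉ lc v := by
  obtain ⟨t₂, rfl⟩ := disc_suffix t u' v hdt
  refine ⟨key_rc t₂ a ?_, lo_not_lc _ a hav⟩
  exact Set.mem_union_right _ ((lo_disc t₂) ▸ hav)

lemma main_step (t u' v : List (Letter A)) (hdt : disc t = u' ++ v)
    (ih : Disciplined (disc t)) (b : A) (hb : b ∈ lo t) :
    b ∈ rc u' ∨ (b ∈ rc v ∧ b ∉ lc v) := by
  have hmem : b ∈ lo (u' ++ v) := by rw [← hdt, lo_disc]; exact hb
  rcases lo_append u' v b hmem with h | h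
  · exact ih u' v hdt b (Set.mem_union_right _ h)
  · exact Or.inr (in_suffix t u' v hdt b h)

lemma cl_step (t u' v : List (Letter A)) (hdt : disc t = u' ++ v)
    (ih : Disciplined (disc t)) (b a : A)
    (ha : a ∈ lc u' ∪ lo u' ∨ a = b) :
    a ∈ (if b ∈ lc u' ∪ lo u' then rc u' else rc u' ∪ {b}) ∨ (a ∈ rc v ∧ a ∉ lc v) := by
  split_ifs with hm
  · rcases ha with ha | rfl
    · exact ih u' v hdt a ha
    · exact ih u' v hdt a hm
  · rcases ha with ha | rfl
    · rcases ih u' v hdt a ha with h | h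
      · exact Or.inl (Set.mem_union_left _ h)
      · exact Or.inr h
    · exact Or.inl (Set.mem_union_right _ rfl)

end Main

theorem disc_disciplined {A : Type} (w : List (Letter A)) : Disciplined (disc w) := by
  induction w with
  | nil =>
    intro u v h a ha
    have hu : u = [] := (List.append_eq_nil_iff.mp (by simpa [disc] using h.symm)).1
    subst hu
    simp [lc, lo] at ha
  | cons c t ih =>
    intro u v h a ha
    cases u with
    | nil => simp [lc, lo] at ha
    | cons d u' =>
      cases c with
      | free b =>
        by_cases hb : b ∈ lo t
        · simp only [disc, hb, if_pos, List.cons_append, List.cons.injEq] at h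
          obtain ⟨rfl, hdt⟩ := h
          simp only [lc, lo, rc, Set.mem_union, Set.mem_diff, Set.mem_singleton_iff] at ha ⊢
          by_cases hab : a = b
          · subst hab
            exact main_step t u' v hdt ih a hb
          · have ha' : a ∈ lc u' ∪ lo u' := by
              rcases ha with ⟨h1, _⟩ | (h1 | h1)
              · exact Set.mem_union_left _ h1
              · exact Set.mem_union_right _ h1
              · exact absurd h1 hab
            exact ih u' v hdt a ha'
        · simp only [disc, hb, if_neg, not_false_iff, List.cons_append, List.cons.injEq] at h
          obtain ⟨rfl, hdt⟩ := h
          simp only [lc, lo, rc, Set.mem_union, Set.mem_diff, Set.mem_singleton_iff] at ha ⊢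
          refine cl_step t u' v hdt ih b a ?_
          rcases ha with ⟨h1, _⟩ | (h1 | h1)
          · exact Or.inl (Set.mem_union_left _ h1)
          · exact Or.inl (Set.mem_union_right _ h1)
          · exact Or.inr h1
      | op b =>
        by_cases hb : b ∈ lo t
        · simp only [disc, hb, if_pos, List.cons_append, List.cons.injEq] at h
          obtain ⟨rfl, hdt⟩ := h
          simp only [lc, lo, rc, Set.mem_union, Set.mem_diff, Set.mem_singleton_iff] at ha ⊢
          by_cases hab : a = b
          · subst hab
            exact main_step t u' v hdt ih a hb
          · have ha' : a ∈ lc u' ∪ lo u' := by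
              rcases ha with (h1 | h1) | ⟨h1, _⟩
              · exact Set.mem_union_left _ h1
              · exact absurd h1 hab
              · exact Set.mem_union_right _ h1
            exact ih u' v hdt a ha'
        · simp only [disc, hb, if_neg, not_false_iff, List.cons_append, List.cons.injEq] at h
          obtain ⟨rfl, hdt⟩ := h
          simp only [lc, lo, rc, Set.mem_union, Set.mem_diff, Set.mem_singleton_iff] at ha ⊢
          refine cl_step t u' v hdt ih b a ?_
          rcases ha with (h1 | h1) | ⟨h1, _⟩
          · exact Or.inl (Set.mem_union_left _ h1)
          · exact Or.inr h1
          · exact Or.inl (Set.mem_union_right _ h1)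
      | cl b =>
        simp only [disc, List.cons_append, List.cons.injEq] at h
        obtain ⟨rfl, hdt⟩ := h
        simp only [lc, lo, rc, Set.mem_union, Set.mem_diff, Set.mem_singleton_iff] at ha ⊢
        refine cl_step t u' v hdt ih b a ?_
        rcases ha with ⟨h1, _⟩ | (h1 | h1)
        · exact Or.inl (Set.mem_union_left _ h1)
        · exact Or.inl (Set.mem_union_right _ h1)
        · exact Or.inr h1
      | both b =>
        simp only [disc, List.cons_append, List.cons.injEq] at h
        obtain ⟨rfl, hdt⟩ := h
        simp only [lc, lo, rc, Set.mem_union, Set.mem_diff, Set.mem_singleton_iff] at ha ⊢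
        refine cl_step t u' v hdt ih b a ?_
        rcases ha with (h1 | h1) | ⟨h1, _⟩
        · exact Or.inl (Set.mem_union_left _ h1)
        · exact Or.inr h1
        · exact Or.inl (Set.mem_union_right _ h1)
end
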